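/- The maps A(ε,δ) = (1 - ε/(1-δ), ε) and D(ε,δ) = (1 - δ/(1-ε), δ) satisfy the dihedral relations of D₅: A⁵ = id, D² = id, and (A∘D)² = id (wherever the compositions are defined). -/

import Mathlib

noncomputable def refA : ℝ × ℝ → ℝ × ℝ := fun p => (1 - p.1 / (1 - p.2), p.1)
noncomputable def refD : ℝ × ℝ → ℝ × ℝ := fun p => (1 - p.2 / (1 - p.1), p.2)

theorem refA_refD_dihedral_relations :
    (∀ ε δ : ℝ, (∀ k < 5, (refA^[k] (ε, δ)).2 ≠ 1) → refA^[5] (ε, δ) = (ε, δ)) ∧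
    (∀ ε δ : ℝ, ε ≠ 1 → (refD (ε, δ)).1 ≠ 1 → refD (refD (ε, δ)) = (ε, δ)) ∧
    (∀ ε δ : ℝ, δ ≠ 1 → (refA (ε, δ)).1 ≠ 1 →
      (refD (refA (ε, δ))).2 ≠ 1 → (refA (refD (refA (ε, δ)))).1 ≠ 1 →
      refD (refA (refD (refA (ε, δ)))) = (ε, δ)) := by
  refine ⟨?_, ?_, ?_⟩
  · intro ε δ h
    have h0 := h 0 (by norm_num)
    have h1 := h 1 (by norm_num)
    have h2 := h 2 (by norm_num)
    have h3 := h 3 (by norm_num)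
    have h4 := h 4 (by norm_num)
    simp only [Function.iterate_succ, Function.iterate_zero, Function.comp_apply, id_eq]
      at h0 h1 h2 h3 h4
    have d0 : (1:ℝ) - δ ≠ 0 := sub_ne_zero.mpr (Ne.symm h0)
    have e1 : refA (ε, δ) = ((1 - δ - ε)/(1 - δ), ε) := by
      simp only [refA]
      refine Prod.ext ?_ rfl
      field_simp
    rw [e1] at h1 h2 h3 h4
    simp only [Prod.snd] at h1
    have d1 : (1:ℝ) - ε ≠ 0 := sub_ne_zero.mpr (Ne.symm h1)
    have e2 : refA ((1 - δ - ε)/(1 - δ), ε) = (δ*ε/((1-δ)*(1-ε)), (1 - δ - ε)/(1 - δ)) := by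
      simp only [refA]
      refine Prod.ext ?_ rfl
      field_simp
      ring
    rw [e2] at h2 h3 h4
    simp only [Prod.snd] at h2
    have hε : ε ≠ 0 := by
      intro he
      apply h2
      rw [he]
      rw [div_eq_one_iff_eq d0]
      ring
    have e3 : refA (δ*ε/((1-δ)*(1-ε)), (1 - δ - ε)/(1 - δ)) =
        ((1 - δ - ε)/(1-ε), δ*ε/((1-δ)*(1-ε))) := by
      simp only [refA]
      refine Prod.ext ?_ rfl
      have heq : (1:ℝ) - (1 - δ - ε)/(1 - δ) = ε/(1-δ) := by field_simp; ring
      rw [heq]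
      field_simp
      ring
    rw [e3] at h3 h4
    simp only [Prod.snd] at h3
    have hde : (1:ℝ) - δ - ε ≠ 0 := by
      intro hh
      apply h3
      rw [div_eq_one_iff_eq (mul_ne_zero d0 d1)]
      have : ε = 1 - δ := by linarith
      rw [this]
      ring
    have e4 : refA ((1 - δ - ε)/(1-ε), δ*ε/((1-δ)*(1-ε))) =
        (δ, (1 - δ - ε)/(1-ε)) := by
      simp only [refA]
      refine Prod.ext ?_ rfl
      have heq : (1:ℝ) - δ*ε/((1-δ)*(1-ε)) = (1-δ-ε)/((1-δ)*(1-ε)) := by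
        field_simp
        ring
      rw [heq]
      field_simp
      ring
    rw [e4] at h4
    simp only [Prod.snd] at h4
    have hd : δ ≠ 0 := by
      intro hh
      apply h4
      rw [hh]
      rw [div_eq_one_iff_eq d1]
      ring
    have e5 : refA (δ, (1 - δ - ε)/(1-ε)) = (ε, δ) := by
      simp only [refA]
      refine Prod.ext ?_ rfl
      have heq : (1:ℝ) - (1 - δ - ε)/(1-ε) = δ/(1-ε) := by field_simp; ring
      rw [heq]
      field_simp
      ring
    show refA (refA (refA (refA (refA (ε, δ))))) = (ε, δ)
    rw [e1, e2, e3, e4, e5]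
  · intro ε δ h1 h2
    have d1 : (1:ℝ) - ε ≠ 0 := sub_ne_zero.mpr (Ne.symm h1)
    have hd : δ ≠ 0 := by
      intro hh
      apply h2
      simp [refD, hh]
    have e1 : refD (ε, δ) = ((1 - ε - δ)/(1 - ε), δ) := by
      simp only [refD]
      refine Prod.ext ?_ rfl
      field_simp
    rw [e1]
    simp only [refD]
    refine Prod.ext ?_ rfl
    have heq : (1:ℝ) - (1 - ε - δ)/(1 - ε) = δ/(1-ε) := by field_simp; ring
    show 1 - δ / (1 - (1 - ε - δ)/(1 - ε)) = ε
    rw [heq]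
    field_simp
    ring
  · intro ε δ h1 h2 h3 h4
    have d0 : (1:ℝ) - δ ≠ 0 := sub_ne_zero.mpr (Ne.symm h1)
    have f1 : refA (ε, δ) = ((1 - δ - ε)/(1 - δ), ε) := by
      simp only [refA]
      refine Prod.ext ?_ rfl
      field_simp
    rw [f1] at h2 h3 h4 ⊢
    simp only [Prod.fst] at h2
    have hε : ε ≠ 0 := by
      intro he
      apply h2
      rw [he, div_eq_one_iff_eq d0]
      ring
    have f2 : refD ((1 - δ - ε)/(1 - δ), ε) = (δ, ε) := by
      simp only [refD]
      refine Prod.ext ?_ rfl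
      have heq : (1:ℝ) - (1 - δ - ε)/(1 - δ) = ε/(1-δ) := by field_simp; ring
      show 1 - ε / (1 - (1 - δ - ε)/(1 - δ)) = δ
      rw [heq]
      field_simp
      ring
    rw [f2] at h3 h4 ⊢
    simp only [Prod.snd] at h3
    have d1 : (1:ℝ) - ε ≠ 0 := sub_ne_zero.mpr (Ne.symm h3)
    have f3 : refA (δ, ε) = ((1 - ε - δ)/(1 - ε), δ) := by
      simp only [refA]
      refine Prod.ext ?_ rfl
      field_simp
    rw [f3] at h4 ⊢
    simp only [Prod.fst] at h4
    have hd : δ ≠ 0 := by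
      intro hh
      apply h4
      rw [hh, div_eq_one_iff_eq d1]
      ring
    simp only [refD]
    refine Prod.ext ?_ rfl
    have heq : (1:ℝ) - (1 - ε - δ)/(1 - ε) = δ/(1-ε) := by field_simp; ring
    show 1 - δ / (1 - (1 - ε - δ)/(1 - ε)) = ε
    rw [heq]
    field_simp
    ring
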